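/- arXiv:1510.05113 — 2 statements merged into one kernel-verified Lean document; each statement's English description precedes it below -/
import Mathlib

section
/- Let H = (V,H) be a boolean representable simplicial complex and let τ be an equivalence relation on V. Then τ is contained in the relation η (where a η b iff cl({a}) = cl({b})) if and only if τ is the kernel of some rank-preserving simplicial map from H to some simplicial complex H'. -/
open scoped Classical

variable {V : Type}

def IsSC (faces : Set (Finset V)) : Prop :=
  (∀ v : V, ({v} : Finset V) ∈ faces) ∧
    ∀ ⦃X Y : Finset V⦄, X ∈ faces → Y ⊆ X → Y ∈ faces

def IsFlat (faces : Set (Finset V)) (F : Set V) : Prop :=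
  ∀ I ∈ faces, (I : Set V) ⊆ F → ∀ p ∉ F, insert p I ∈ faces

def cl (faces : Set (Finset V)) (X : Set V) : Set V :=
  ⋂₀ {F : Set V | IsFlat faces F ∧ X ⊆ F}

def BRep (faces : Set (Finset V)) : Prop :=
  ∀ X ∈ faces, ∃ (k : ℕ) (F : Fin (k + 1) → Set V) (x : Fin k → V),
    (∀ i, IsFlat faces (F i)) ∧ StrictMono F ∧ Function.Injective x ∧
    (∀ i : Fin k, x i ∈ F i.succ \ F i.castSucc) ∧
    X = Finset.image x Finset.univ

def skel (faces : Set (Finset V)) : SimpleGraph V where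
  Adj p q := p ≠ q ∧ ({p, q} : Finset V) ∈ faces
  symm := ⟨by
    rintro p q ⟨h1, h2⟩
    exact ⟨h1.symm, by rwa [Finset.pair_comm]⟩⟩
  loopless := ⟨by rintro p ⟨h, _⟩; exact h rfl⟩

def flatGraph (faces : Set (Finset V)) : SimpleGraph V where
  Adj p q := p ≠ q ∧ cl faces {p, q} ≠ Set.univ
  symm := ⟨by
    rintro p q ⟨h1, h2⟩
    exact ⟨h1.symm, by rwa [Set.pair_comm]⟩⟩
  loopless := ⟨by rintro p ⟨h, _⟩; exact h rfl⟩

lemma cl_subset_of_flat {faces : Set (Finset V)} {F : Set V} (hF : IsFlat faces F)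
    {e : V} (he : e ∈ F) : cl faces {e} ⊆ F :=
  Set.sInter_subset_of_mem ⟨hF, Set.singleton_subset_iff.2 he⟩

lemma mem_cl_self {faces : Set (Finset V)} (e : V) : e ∈ cl faces {e} := by
  intro F hF
  exact hF.2 rfl

lemma cl_ne_of_flat {faces : Set (Finset V)} {F : Set V} (hF : IsFlat faces F)
    {e f : V} (he : e ∈ F) (hf : f ∉ F) : cl faces {e} ≠ cl faces {f} := by
  intro h
  exact hf (cl_subset_of_flat hF he (h ▸ mem_cl_self f))

lemma pair_cl_ne {faces : Set (Finset V)} (hbr : BRep faces) {a b : V}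
    (hab : a ≠ b) (h : ({a, b} : Finset V) ∈ faces) :
    cl faces {a} ≠ cl faces {b} := by
  obtain ⟨k, F, x, hF, hmono, hinj, hx, hX⟩ := hbr _ h
  have hk : k = 2 := by
    have h1 : (Finset.image x Finset.univ).card = k := by
      rw [Finset.card_image_of_injective _ hinj, Finset.card_univ, Fintype.card_fin]
    have h2 : ({a, b} : Finset V).card = 2 := Finset.card_pair hab
    rw [← hX, h2] at h1
    omega
  subst hk
  have ha : a ∈ Finset.image x Finset.univ := by
    rw [← hX]; simp
  have hb : b ∈ Finset.image x Finset.univ := by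
    rw [← hX]; simp
  simp only [Finset.mem_image, Finset.mem_univ, true_and] at ha hb
  obtain ⟨ia, hia⟩ := ha
  obtain ⟨ib, hib⟩ := hb
  have h0 := hx 0
  have h1 := hx 1
  have hmem0 : x 0 ∈ F 1 := by
    have e : (Fin.succ (0 : Fin 2)) = (1 : Fin 3) := rfl
    rw [← e]; exact h0.1
  have hmem1 : x 1 ∉ F 1 := by
    have e : (Fin.castSucc (1 : Fin 2)) = (1 : Fin 3) := rfl
    rw [← e]; exact h1.2
  have key : ∀ i j : Fin 2, i ≠ j → cl faces {x i} ≠ cl faces {x j} := by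
    intro i j hij
    fin_cases i <;> fin_cases j
    · exact absurd rfl hij
    · exact cl_ne_of_flat (hF 1) hmem0 hmem1
    · exact (cl_ne_of_flat (hF 1) hmem0 hmem1).symm
    · exact absurd rfl hij
  have hiab : ia ≠ ib := fun h => hab (by rw [← hia, ← hib, h])
  rw [← hia, ← hib]
  exact key ia ib hiab

lemma cl_eq_of_pair_not_mem {faces : Set (Finset V)} (hsc : IsSC faces) {a b : V}
    (h : ({a, b} : Finset V) ∉ faces) : cl faces {a} = cl faces {b} := by
  have key : ∀ p q : V, ({p, q} : Finset V) ∉ faces → ∀ F : Set V, IsFlat faces F → p ∈ F → q ∈ F := by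
    intro p q hpq F hF hp
    by_contra hq
    have := hF {p} (hsc.1 p) (by simpa using hp) q hq
    exact hpq (by rw [Finset.pair_comm]; simpa using this)
  have hset : {F : Set V | IsFlat faces F ∧ ({a} : Set V) ⊆ F} =
      {F : Set V | IsFlat faces F ∧ ({b} : Set V) ⊆ F} := by
    ext F
    simp only [Set.mem_setOf_eq, Set.singleton_subset_iff]
    constructor
    · rintro ⟨hF, ha⟩
      exact ⟨hF, key a b h F hF ha⟩
    · rintro ⟨hF, hbm⟩
      exact ⟨hF, key b a (by rwa [Finset.pair_comm]) F hF hbm⟩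
  unfold cl
  rw [hset]

theorem ker_rank_preserving_iff_sub_eta [Fintype V] [Nonempty V]
    {faces : Set (Finset V)} (hsc : IsSC faces) (hbr : BRep faces)
    (τ : V → V → Prop) (hτ : Equivalence τ) :
    (∀ a b : V, τ a b → cl faces {a} = cl faces {b}) ↔
      ∃ (W : Type) (faces' : Set (Finset W)) (φ : V → W),
        IsSC faces' ∧ (∀ X ∈ faces, X.image φ ∈ faces') ∧
        (∀ X ∈ faces, (X.image φ).card = X.card) ∧
        (∀ a b : V, τ a b ↔ φ a = φ b) := by
  constructor
  · intro hsub
    set s : Setoid V := ⟨τ, hτ⟩ with hs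
    letI : DecidableEq (Quotient s) := fun a b => Classical.propDecidable (a = b)
    refine ⟨Quotient s, {Y | ∃ X ∈ faces, Y ⊆ X.image (Quotient.mk s)},
      Quotient.mk s, ⟨?_, ?_⟩, ?_, ?_, ?_⟩
    · intro w
      obtain ⟨v, rfl⟩ := Quotient.exists_rep w
      exact ⟨{v}, hsc.1 v, by simp⟩
    · rintro X Y ⟨Z, hZ, hXZ⟩ hYX
      exact ⟨Z, hZ, hYX.trans hXZ⟩
    · intro X hX
      exact ⟨X, hX, Finset.Subset.refl _⟩
    · intro X hX
      have hinjOn : Set.InjOn (Quotient.mk s) X := ?_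
      · exact Finset.card_image_of_injOn hinjOn
      intro a ha b hb heq
      by_contra hne
      have hpair : ({a, b} : Finset V) ∈ faces :=
        hsc.2 hX (Finset.insert_subset ha (Finset.singleton_subset_iff.2 hb))
      exact pair_cl_ne hbr hne hpair (hsub a b (Quotient.exact heq))
    · intro a b
      exact ⟨fun h => Quotient.sound h, fun h => Quotient.exact h⟩
  · rintro ⟨W, faces', φ, hsc', hmap, hcard, hker⟩ a b hab
    by_cases hne : a = b
    · rw [hne]
    · apply cl_eq_of_pair_not_mem hsc
      intro hpair
      have := hcard _ hpair
      rw [Finset.card_pair hne] at this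
      have himg : ({a, b} : Finset V).image φ = {φ a} := by
        have : φ a = φ b := (hker a b).1 hab
        simp [Finset.image_insert, this]
      rw [himg, Finset.card_singleton] at this
      omega
end

section
/- Let H = (V,H) be a boolean representable simplicial complex, τ ⊆ η an equivalence relation with projection φ, and H/τ the quotient complex. For distinct classes vτ ≠ wτ: v—w is an edge of the graph of flats of H if and only if vτ—wτ is an edge of the graph of flats of H/τ. -/
open scoped Classical

variable {V : Type}

def quotFaces (faces : Set (Finset V)) (τ : Setoid V) :
    Set (Finset (Quotient τ)) :=
  {Y | ∃ X ∈ faces, Y = X.image (Quotient.mk τ)}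

lemma subset_cl (faces : Set (Finset V)) (S : Set V) : S ⊆ cl faces S := by
  intro a ha F hF
  exact hF.2 ha

lemma cl_min {faces : Set (Finset V)} {S F : Set V} (hF : IsFlat faces F) (hS : S ⊆ F) :
    cl faces S ⊆ F :=
  Set.sInter_subset_of_mem ⟨hF, hS⟩

lemma isFlat_cl (faces : Set (Finset V)) (S : Set V) : IsFlat faces (cl faces S) := by
  intro I hI hIsub p hp
  rw [cl, Set.mem_sInter] at hp
  push_neg at hp
  obtain ⟨F, hF, hpF⟩ := hp
  exact hF.1 I hI (hIsub.trans (Set.sInter_subset_of_mem hF)) p hpF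

lemma empty_mem [Nonempty V] {faces : Set (Finset V)} (hsc : IsSC faces) :
    (∅ : Finset V) ∈ faces := by
  obtain ⟨v⟩ := ‹Nonempty V›
  exact hsc.2 (hsc.1 v) (Finset.empty_subset _)

lemma chain_mem [Nonempty V] {faces : Set (Finset V)} (hsc : IsSC faces)
    {k : ℕ} {F : Fin (k + 1) → Set V} {x : Fin k → V}
    (hF : ∀ i, IsFlat faces (F i)) (hmono : Monotone F)
    (hx : ∀ i : Fin k, x i ∈ F i.succ \ F i.castSucc) :
    Finset.image x Finset.univ ∈ faces := by
  have key : ∀ j : ℕ, j ≤ k →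
      (Finset.univ.filter (fun i : Fin k => (i : ℕ) < j)).image x ∈ faces := by
    intro j
    induction j with
    | zero => intro _; simpa using empty_mem hsc
    | succ j ih =>
      intro hj
      have hjk : j < k := hj
      have hset : (Finset.univ.filter (fun i : Fin k => (i : ℕ) < j + 1))
          = insert ⟨j, hjk⟩ (Finset.univ.filter (fun i : Fin k => (i : ℕ) < j)) := by
        ext i
        simp only [Finset.mem_filter, Finset.mem_univ, true_and, Finset.mem_insert,
          Fin.ext_iff]
        omega
      rw [hset, Finset.image_insert]
      have hprev := ih (le_of_lt hjk)
      have hsub : ((Finset.univ.filter (fun i : Fin k => (i : ℕ) < j)).image x : Set V)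
          ⊆ F ⟨j, by omega⟩ := by
        intro a ha
        simp only [Finset.coe_image, Set.mem_image, Finset.mem_coe, Finset.mem_filter] at ha
        obtain ⟨i, ⟨-, hij⟩, rfl⟩ := ha
        have h1 : (i.succ : Fin (k+1)) ≤ ⟨j, by omega⟩ := by
          simp [Fin.le_def]; omega
        exact hmono h1 (hx i).1
      have hnot : x ⟨j, hjk⟩ ∉ F ⟨j, by omega⟩ := by
        have := (hx ⟨j, hjk⟩).2
        simpa [Fin.castSucc] using this
      exact hF ⟨j, by omega⟩ _ hprev hsub _ hnot
  have hk := key k le_rfl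
  have : (Finset.univ.filter (fun i : Fin k => (i : ℕ) < k)) = Finset.univ := by
    ext i; simp [i.isLt]
  rwa [this] at hk

lemma face_inj {faces : Set (Finset V)} (hbr : BRep faces)
    {X : Finset V} {a b : V} (hX : X ∈ faces) (ha : a ∈ X) (hb : b ∈ X)
    (hab : cl faces ({a} : Set V) = cl faces ({b} : Set V)) : a = b := by
  obtain ⟨k, F, x, hF, hmono, hinj, hx, rfl⟩ := hbr X hX
  simp only [Finset.mem_image, Finset.mem_univ, true_and] at ha hb
  obtain ⟨i, rfl⟩ := ha
  obtain ⟨j, rfl⟩ := hb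
  rcases lt_trichotomy i j with h | h | h
  · exfalso
    have h1 : (i.succ : Fin (k+1)) ≤ j.castSucc := by
      simp only [Fin.le_def, Fin.val_succ, Fin.coe_castSucc]
      exact Fin.lt_iff_val_lt_val.mp h
    have hmem : x i ∈ F j.castSucc := hmono.monotone h1 (hx i).1
    have hcl : cl faces ({x i} : Set V) ⊆ F j.castSucc :=
      cl_min (hF _) (by simpa using hmem)
    have hmem2 : x j ∈ cl faces ({x j} : Set V) := subset_cl faces _ rfl
    rw [← hab] at hmem2
    exact (hx j).2 (hcl hmem2)
  · rw [h]
  · exfalso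
    have h1 : (j.succ : Fin (k+1)) ≤ i.castSucc := by
      simp only [Fin.le_def, Fin.val_succ, Fin.coe_castSucc]
      exact Fin.lt_iff_val_lt_val.mp h
    have hmem : x j ∈ F i.castSucc := hmono.monotone h1 (hx j).1
    have hcl : cl faces ({x j} : Set V) ⊆ F i.castSucc :=
      cl_min (hF _) (by simpa using hmem)
    have hmem2 : x i ∈ cl faces ({x i} : Set V) := subset_cl faces _ rfl
    rw [hab] at hmem2
    exact (hx i).2 (hcl hmem2)

lemma exchange [Nonempty V] {faces : Set (Finset V)} (hsc : IsSC faces) (hbr : BRep faces)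
    {X : Finset V} {a b : V} (hX : X ∈ faces) (ha : a ∈ X) (hb : b ∉ X)
    (hab : cl faces ({a} : Set V) = cl faces ({b} : Set V)) :
    insert b (X.erase a) ∈ faces := by
  obtain ⟨k, F, x, hF, hmono, hinj, hx, hXeq⟩ := hbr X hX
  subst hXeq
  have ha' := ha
  simp only [Finset.mem_image, Finset.mem_univ, true_and] at ha'
  obtain ⟨j, rfl⟩ := ha'
  set x' : Fin k → V := Function.update x j b with hx'def
  have hx' : ∀ i : Fin k, x' i ∈ F i.succ \ F i.castSucc := by
    intro i
    by_cases hij : i = j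
    · subst hij
      simp only [hx'def, Function.update_self]
      constructor
      · have hcl : cl faces ({x i} : Set V) ⊆ F i.succ :=
          cl_min (hF _) (by simpa using (hx i).1)
        rw [hab] at hcl
        exact hcl (subset_cl faces _ rfl)
      · intro hbF
        have hcl : cl faces ({b} : Set V) ⊆ F i.castSucc :=
          cl_min (hF _) (by simpa using hbF)
        rw [← hab] at hcl
        exact (hx i).2 (hcl (subset_cl faces _ rfl))
    · simpa only [hx'def, Function.update_of_ne hij] using hx i
  have hmem := chain_mem hsc hF hmono.monotone hx'
  have himg : Finset.image x' Finset.univ = insert b ((Finset.image x Finset.univ).erase (x j)) := by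
    ext c
    simp only [Finset.mem_image, Finset.mem_univ, true_and, Finset.mem_insert, Finset.mem_erase]
    constructor
    · rintro ⟨i, rfl⟩
      by_cases hij : i = j
      · subst hij; left; simp [hx'def]
      · right
        simp only [hx'def, Function.update_of_ne hij]
        refine ⟨fun h => hij (hinj h), ⟨i, rfl⟩⟩
    · rintro (rfl | ⟨hne, i, rfl⟩)
      · exact ⟨j, by simp [hx'def]⟩
      · have hij : i ≠ j := fun h => hne (by rw [h])
        exact ⟨i, by simp [hx'def, Function.update_of_ne hij]⟩
  rwa [himg] at hmem

lemma lift_face [Nonempty V] {faces : Set (Finset V)} (hsc : IsSC faces) (hbr : BRep faces)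
    (τ : Setoid V) (hτ : ∀ a b : V, τ.r a b → cl faces {a} = cl faces {b}) :
    ∀ (n : ℕ) (Z X' : Finset V), Z ∈ faces → (Z \ X').card = n →
      (∀ a ∈ X', ∀ b ∈ X', Quotient.mk τ a = Quotient.mk τ b → a = b) →
      Z.image (Quotient.mk τ) = X'.image (Quotient.mk τ) → X' ∈ faces := by
  intro n
  induction n with
  | zero =>
    intro Z X' hZ hcard hinj himg
    have hZX : Z ⊆ X' := by
      rw [← Finset.sdiff_eq_empty_iff_subset]
      exact Finset.card_eq_zero.mp hcard
    have hinjZ : ∀ a ∈ Z, ∀ b ∈ Z, Quotient.mk τ a = Quotient.mk τ b → a = b := by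
      intro a ha b hb h
      exact face_inj hbr hZ ha hb (hτ a b (Quotient.exact h))
    have hcZ : Z.card = (Z.image (Quotient.mk τ)).card :=
      (Finset.card_image_of_injOn (fun a ha b hb h => hinjZ a ha b hb h)).symm
    have hcX : (X'.image (Quotient.mk τ)).card = X'.card :=
      Finset.card_image_of_injOn (fun a ha b hb h => hinj a ha b hb h)
    have : X'.card ≤ Z.card := by rw [hcZ, himg, hcX]
    have heq : Z = X' := Finset.eq_of_subset_of_card_le hZX this
    rwa [← heq]
  | succ n ih =>
    intro Z X' hZ hcard hinj himg
    have hne : (Z \ X').Nonempty := by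
      rw [← Finset.card_pos, hcard]; omega
    obtain ⟨a, ha⟩ := hne
    obtain ⟨haZ, haX⟩ := Finset.mem_sdiff.mp ha
    have : Quotient.mk τ a ∈ X'.image (Quotient.mk τ) := by
      rw [← himg]; exact Finset.mem_image_of_mem _ haZ
    obtain ⟨b, hbX, hba⟩ := Finset.mem_image.mp this
    have hcl : cl faces ({a} : Set V) = cl faces ({b} : Set V) :=
      (hτ b a (Quotient.exact hba)).symm
    have hbZ : b ∉ Z := by
      intro hbZ
      exact haX (face_inj hbr hZ hbZ haZ (hτ b a (Quotient.exact hba)) ▸ hbX)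
    have hZ2 : insert b (Z.erase a) ∈ faces := exchange hsc hbr hZ haZ hbZ hcl
    have himg2 : (insert b (Z.erase a)).image (Quotient.mk τ) = X'.image (Quotient.mk τ) := by
      rw [Finset.image_insert, hba, ← himg]
      conv_rhs => rw [← Finset.insert_erase haZ]
      rw [Finset.image_insert]
    have hcard2 : ((insert b (Z.erase a)) \ X').card = n := by
      have h1 : (insert b (Z.erase a)) \ X' = (Z \ X').erase a := by
        ext c
        simp only [Finset.mem_sdiff, Finset.mem_insert, Finset.mem_erase]
        constructor
        · rintro ⟨rfl | ⟨hca, hcZ⟩, hcX⟩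
          · exact absurd hbX hcX
          · exact ⟨hca, hcZ, hcX⟩
        · rintro ⟨hca, hcZ, hcX⟩
          exact ⟨Or.inr ⟨hca, hcZ⟩, hcX⟩
      rw [h1, Finset.card_erase_of_mem ha, hcard]
      omega
    exact ih (insert b (Z.erase a)) X' hZ2 hcard2 hinj himg2

lemma flat_sat {faces : Set (Finset V)} {τ : Setoid V}
    (hτ : ∀ a b : V, τ.r a b → cl faces {a} = cl faces {b})
    {F : Set V} (hF : IsFlat faces F) {a b : V} (hab : τ.r a b) (ha : a ∈ F) : b ∈ F := by
  have h1 : cl faces ({a} : Set V) ⊆ F := cl_min hF (by simpa using ha)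
  have h2 : b ∈ cl faces ({b} : Set V) := subset_cl faces _ rfl
  rw [← hτ a b hab] at h2
  exact h1 h2

lemma image_flat {faces : Set (Finset V)} {τ : Setoid V}
    (hτ : ∀ a b : V, τ.r a b → cl faces {a} = cl faces {b})
    {F : Set V} (hF : IsFlat faces F) :
    IsFlat (quotFaces faces τ) (Quotient.mk τ '' F) := by
  rintro Y ⟨X, hX, rfl⟩ hYsub q hq
  obtain ⟨u, rfl⟩ := Quotient.exists_rep q
  have huF : u ∉ F := fun huF => hq ⟨u, huF, rfl⟩
  have hXF : (X : Set V) ⊆ F := by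
    intro c hc
    have : Quotient.mk τ c ∈ Quotient.mk τ '' F := by
      apply hYsub
      simp only [Finset.coe_image, Set.mem_image]
      exact ⟨c, hc, rfl⟩
    obtain ⟨f, hfF, hfc⟩ := this
    exact flat_sat hτ hF (Quotient.exact hfc) hfF
  have hins : insert u X ∈ faces := hF X hX hXF u huF
  exact ⟨insert u X, hins, by rw [Finset.image_insert]; ext q; simp⟩

lemma preimage_flat [Nonempty V] {faces : Set (Finset V)} (hsc : IsSC faces) (hbr : BRep faces)
    {τ : Setoid V} (hτ : ∀ a b : V, τ.r a b → cl faces {a} = cl faces {b})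
    {F' : Set (Quotient τ)} (hF' : IsFlat (quotFaces faces τ) F') :
    IsFlat faces (Quotient.mk τ ⁻¹' F') := by
  intro I hI hIsub p hp
  have hIq : I.image (Quotient.mk τ) ∈ quotFaces faces τ := ⟨I, hI, rfl⟩
  have hIqsub : ((I.image (Quotient.mk τ) : Finset (Quotient τ)) : Set (Quotient τ)) ⊆ F' := by
    intro q hq
    simp only [Finset.coe_image, Set.mem_image, Finset.mem_coe] at hq
    obtain ⟨c, hc, rfl⟩ := hq
    exact hIsub hc
  have hpq : Quotient.mk τ p ∉ F' := hp
  have hins := hF' _ hIq hIqsub _ hpq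
  obtain ⟨Z, hZ, hZeq⟩ := hins
  refine lift_face hsc hbr τ hτ _ Z (insert p I) hZ rfl ?_ ?_
  · intro a haX b hbX hab
    simp only [Finset.mem_insert] at haX hbX
    rcases haX with rfl | haI
    · rcases hbX with rfl | hbI
      · rfl
      · exact absurd (hab ▸ hIsub hbI : Quotient.mk τ a ∈ F') hpq
    · rcases hbX with rfl | hbI
      · exact absurd (hab ▸ hIsub haI : Quotient.mk τ b ∈ F') (by rwa [← hab] at hpq)
      · exact face_inj hbr hI haI hbI (hτ a b (Quotient.exact hab))
  · rw [← hZeq, Finset.image_insert]; ext q; simp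


theorem flatGraph_edge_iff_quot [Fintype V] [Nonempty V]
    {faces : Set (Finset V)} (hsc : IsSC faces) (hbr : BRep faces)
    (τ : Setoid V) (hτ : ∀ a b : V, τ.r a b → cl faces {a} = cl faces {b})
    (v w : V) (hvw : Quotient.mk τ v ≠ Quotient.mk τ w) :
    (flatGraph faces).Adj v w ↔
      (flatGraph (quotFaces faces τ)).Adj (Quotient.mk τ v) (Quotient.mk τ w) := by
  constructor
  · rintro ⟨hne, hcl⟩
    refine ⟨hvw, ?_⟩
    set F := cl faces ({v, w} : Set V) with hFdef
    have hFflat : IsFlat faces F := isFlat_cl faces _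
    have hvF : v ∈ F := subset_cl faces _ (by simp)
    have hwF : w ∈ F := subset_cl faces _ (by simp)
    have hflatQ : IsFlat (quotFaces faces τ) (Quotient.mk τ '' F) := image_flat hτ hFflat
    have hsubQ : ({Quotient.mk τ v, Quotient.mk τ w} : Set (Quotient τ)) ⊆ Quotient.mk τ '' F := by
      rintro q (rfl | rfl)
      · exact ⟨v, hvF, rfl⟩
      · exact ⟨w, hwF, rfl⟩
    have hmin : cl (quotFaces faces τ) {Quotient.mk τ v, Quotient.mk τ w} ⊆ Quotient.mk τ '' F :=
      cl_min hflatQ hsubQ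
    obtain ⟨u, huF⟩ := (Set.ne_univ_iff_exists_notMem _).mp hcl
    have huQ : Quotient.mk τ u ∉ Quotient.mk τ '' F := by
      rintro ⟨f, hfF, hfu⟩
      exact huF (flat_sat hτ hFflat (Quotient.exact hfu) hfF)
    intro heq
    exact huQ (hmin (heq ▸ Set.mem_univ _))
  · rintro ⟨hne, hcl⟩
    have hvwne : v ≠ w := fun h => hvw (by rw [h])
    refine ⟨hvwne, ?_⟩
    set F' := cl (quotFaces faces τ) ({Quotient.mk τ v, Quotient.mk τ w} : Set (Quotient τ))
      with hF'def
    have hF'flat : IsFlat (quotFaces faces τ) F' := isFlat_cl _ _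
    have hpre : IsFlat faces (Quotient.mk τ ⁻¹' F') := preimage_flat hsc hbr hτ hF'flat
    have hvp : v ∈ Quotient.mk τ ⁻¹' F' := subset_cl _ _ (by simp)
    have hwp : w ∈ Quotient.mk τ ⁻¹' F' := subset_cl _ _ (by simp)
    have hmin : cl faces ({v, w} : Set V) ⊆ Quotient.mk τ ⁻¹' F' := by
      apply cl_min hpre
      rintro a (rfl | rfl)
      · exact hvp
      · exact hwp
    obtain ⟨q, hq⟩ := (Set.ne_univ_iff_exists_notMem _).mp hcl
    obtain ⟨u, rfl⟩ := Quotient.exists_rep q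
    intro heq
    exact hq (hmin (heq ▸ Set.mem_univ u))
end
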